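/- Let γ > 1, 0 < a < b < ∞, and let (X, μ) be a finite measure space. Then there exists a constant C = C(a,b,γ) > 0 such that for every measurable ρ : X → [0,∞), every measurable r : X → [a,b], and every bounded measurable F : X → ℝ, one has ∫_X ρ F² dμ ≤ C ‖F‖_∞² ( μ(X) + ∫_X E(ρ|r) dμ ), where ‖F‖_∞ is the essential supremum of |F|. -/

import Mathlib

open MeasureTheory

/-- The pressure potential `P(s) = (s^γ − s)/(γ − 1)` associated with `p(s) = s^γ`. -/
noncomputable def Ppot (γ : ℝ) : ℝ → ℝ := fun s => (s ^ γ - s) / (γ - 1)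

/-- The relative pressure energy `E(ρ|r) = P(ρ) − P'(r)(ρ − r) − P(r)`. -/
noncomputable def relE (γ ρ r : ℝ) : ℝ :=
  Ppot γ ρ - deriv (Ppot γ) r * (ρ - r) - Ppot γ r

lemma deriv_Ppot (γ : ℝ) (hγ : 1 < γ) (r : ℝ) :
    deriv (Ppot γ) r = (γ * r ^ (γ - 1) - 1) / (γ - 1) := by
  have h : HasDerivAt (fun s : ℝ => (s ^ γ - s) / (γ - 1))
      ((γ * r ^ (γ - 1) - 1) / (γ - 1)) r :=
    (((Real.hasDerivAt_rpow_const (Or.inr hγ.le)).sub (hasDerivAt_id r)).div_const (γ - 1))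
  exact h.deriv

lemma relE_eq (γ ρ r : ℝ) (hγ : 1 < γ) (hr : 0 < r) :
    relE γ ρ r = (ρ ^ γ - γ * r ^ (γ - 1) * ρ + (γ - 1) * r ^ γ) / (γ - 1) := by
  have hrr : r ^ (γ - 1) * r = r ^ γ := by
    rw [← Real.rpow_add_one hr.ne']; ring_nf
  have hne : γ - 1 ≠ 0 := by linarith
  simp only [relE, Ppot, deriv_Ppot γ hγ]
  field_simp
  nlinarith [hrr]

lemma young (γ ρ r : ℝ) (hγ : 1 < γ) (hρ : 0 ≤ ρ) (hr : 0 ≤ r) :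
    γ * r ^ (γ - 1) * ρ ≤ ρ ^ γ + (γ - 1) * r ^ γ := by
  have hγ0 : (0:ℝ) < γ := by linarith
  have h := Real.geom_mean_le_arith_mean2_weighted
    (by positivity : (0:ℝ) ≤ 1/γ) (by
      have : (1:ℝ)/γ ≤ 1 := by rw [div_le_one hγ0]; linarith
      linarith : (0:ℝ) ≤ 1 - 1/γ)
    (by positivity : (0:ℝ) ≤ ρ ^ γ) (by positivity : (0:ℝ) ≤ r ^ γ) (by ring)
  have h1 : (ρ ^ γ) ^ ((1:ℝ)/γ) = ρ := by
    rw [← Real.rpow_mul hρ, mul_one_div, div_self hγ0.ne', Real.rpow_one]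
  have h2 : (r ^ γ) ^ (1 - (1:ℝ)/γ) = r ^ (γ - 1) := by
    rw [← Real.rpow_mul hr]
    congr 1
    field_simp
  rw [h1, h2] at h
  have := mul_le_mul_of_nonneg_left h hγ0.le
  calc γ * r ^ (γ - 1) * ρ = γ * (ρ * r ^ (γ - 1)) := by ring
    _ ≤ γ * (1/γ * ρ ^ γ + (1 - 1/γ) * r ^ γ) := this
    _ = ρ ^ γ + (γ - 1) * r ^ γ := by field_simp

lemma relE_nonneg (γ ρ r : ℝ) (hγ : 1 < γ) (hρ : 0 ≤ ρ) (hr : 0 < r) :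
    0 ≤ relE γ ρ r := by
  rw [relE_eq γ ρ r hγ hr]
  have := young γ ρ r hγ hρ hr.le
  have hne : (0:ℝ) < γ - 1 := by linarith
  apply div_nonneg _ hne.le
  linarith

lemma pointwise_bound (γ a b : ℝ) (hγ : 1 < γ) (ha : 0 < a) (hab : a < b) :
    ∃ C > 0, ∀ ρ r : ℝ, 0 ≤ ρ → r ∈ Set.Icc a b → ρ ≤ C * (1 + relE γ ρ r) := by
  have hγ1 : (0:ℝ) < γ - 1 := by linarith
  have hb : (0:ℝ) < b := lt_trans ha hab
  set M : ℝ := b * (2 * γ) ^ ((1:ℝ)/(γ - 1)) with hM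
  set c : ℝ := γ * b ^ (γ - 1) / (γ - 1) with hc
  have hMpos : 0 < M := by positivity
  have hcpos : 0 < c := by positivity
  refine ⟨max M (1/c), lt_max_of_lt_left hMpos, ?_⟩
  intro ρ r hρ hr
  obtain ⟨hra, hrb⟩ := hr
  have hr0 : 0 < r := lt_of_lt_of_le ha hra
  have hE0 : 0 ≤ relE γ ρ r := relE_nonneg γ ρ r hγ hρ hr0
  have h1E : (1:ℝ) ≤ 1 + relE γ ρ r := by linarith
  rcases le_or_gt ρ M with h | h
  · calc ρ ≤ M := h
      _ ≤ M * (1 + relE γ ρ r) := le_mul_of_one_le_right hMpos.le h1E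
      _ ≤ max M (1/c) * (1 + relE γ ρ r) := by
          apply mul_le_mul_of_nonneg_right (le_max_left _ _); linarith
  · -- ρ > M : show c * ρ ≤ relE
    have hMg : M ^ (γ - 1) = 2 * γ * b ^ (γ - 1) := by
      rw [hM, Real.mul_rpow hb.le (by positivity), ← Real.rpow_mul (by positivity)]
      rw [one_div, inv_mul_cancel₀ hγ1.ne', Real.rpow_one]; ring
    have hρM : ρ ^ (γ - 1) ≥ M ^ (γ - 1) :=
      Real.rpow_le_rpow hMpos.le h.le hγ1.le
    have hργ : ρ ^ γ = ρ ^ (γ - 1) * ρ := by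
      rw [← Real.rpow_add_one (lt_trans hMpos h).ne']; ring_nf
    have hrpow : r ^ (γ - 1) ≤ b ^ (γ - 1) := Real.rpow_le_rpow hr0.le hrb hγ1.le
    have key : ρ ^ γ ≥ 2 * γ * b ^ (γ - 1) * ρ := by
      rw [hργ]
      have := mul_le_mul_of_nonneg_right hρM hρ
      calc 2 * γ * b ^ (γ - 1) * ρ = M ^ (γ - 1) * ρ := by rw [hMg]
        _ ≤ ρ ^ (γ - 1) * ρ := this
    have hbpos : 0 < b ^ (γ - 1) := by positivity
    have hEge : c * ρ ≤ relE γ ρ r := by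
      rw [relE_eq γ ρ r hγ hr0, hc, div_mul_eq_mul_div, div_le_div_iff_of_pos_right hγ1]
      have h3 : γ * r ^ (γ - 1) * ρ ≤ γ * b ^ (γ - 1) * ρ := by
        apply mul_le_mul_of_nonneg_right _ hρ
        apply mul_le_mul_of_nonneg_left hrpow (by linarith)
      have h4 : (0:ℝ) ≤ (γ - 1) * r ^ γ := by positivity
      nlinarith
    calc ρ = (1/c) * (c * ρ) := by field_simp
      _ ≤ (1/c) * relE γ ρ r := by
          apply mul_le_mul_of_nonneg_left hEge (by positivity)
      _ ≤ max M (1/c) * (1 + relE γ ρ r) := by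
          apply mul_le_mul (le_max_right _ _) (by linarith) hE0 (le_max_of_le_left hMpos.le)

/-- Abstract form of estimate (4.4): `∫ ρ F² ≤ C ‖F‖_∞² (μ(X) + ∫ E(ρ|r))`. -/
theorem stmt_11 (γ a b : ℝ) (hγ : 1 < γ) (ha : 0 < a) (hab : a < b)
    {X : Type*} [MeasurableSpace X] (μ : Measure X) [IsFiniteMeasure μ] :
    ∃ C > 0, ∀ ρ r F : X → ℝ, Measurable ρ → Measurable r → Measurable F →
      (∀ x, 0 ≤ ρ x) → (∀ x, r x ∈ Set.Icc a b) → eLpNorm F ⊤ μ < ⊤ →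
      ∫⁻ x, ENNReal.ofReal (ρ x * (F x) ^ 2) ∂μ ≤
        ENNReal.ofReal C * (eLpNorm F ⊤ μ) ^ 2 *
          (μ Set.univ + ∫⁻ x, ENNReal.ofReal (relE γ (ρ x) (r x)) ∂μ) := by
  obtain ⟨C, hC, hkey⟩ := pointwise_bound γ a b hγ ha hab
  refine ⟨C, hC, ?_⟩
  intro ρ r F hρm hrm hFm hρ0 hrab hF
  set N := eLpNorm F ⊤ μ with hN
  have hN2 : N ^ 2 ≠ ⊤ := ENNReal.pow_ne_top hF.ne
  -- step 1: a.e. pointwise bound by N^2 * ofReal (ρ x)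
  have hae : ∀ᵐ x ∂μ, ENNReal.ofReal (ρ x * (F x) ^ 2) ≤ N ^ 2 * ENNReal.ofReal (ρ x) := by
    have h1 : ∀ᵐ x ∂μ, (‖F x‖₊ : ENNReal) ≤ N := by
      rw [hN, eLpNorm_exponent_top]
      exact ae_le_eLpNormEssSup
    filter_upwards [h1] with x hx
    have : ENNReal.ofReal (ρ x * (F x) ^ 2)
        = ENNReal.ofReal (ρ x) * (‖F x‖₊ : ENNReal) ^ 2 := by
      rw [ENNReal.ofReal_mul (hρ0 x), ← sq_abs (F x),
        ENNReal.ofReal_pow (abs_nonneg _), ← Real.enorm_eq_ofReal_abs, enorm_eq_nnnorm]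
    rw [this, mul_comm]
    exact mul_le_mul_left (pow_le_pow_left' hx 2) _
  have step1 : ∫⁻ x, ENNReal.ofReal (ρ x * (F x) ^ 2) ∂μ
      ≤ N ^ 2 * ∫⁻ x, ENNReal.ofReal (ρ x) ∂μ := by
    rw [← lintegral_const_mul' _ _ hN2]
    exact lintegral_mono_ae hae
  -- step 2: pointwise bound of ρ by C(1+E)
  have step2 : ∫⁻ x, ENNReal.ofReal (ρ x) ∂μ ≤
      ENNReal.ofReal C * (μ Set.univ + ∫⁻ x, ENNReal.ofReal (relE γ (ρ x) (r x)) ∂μ) := by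
    have hpw : ∀ x, ENNReal.ofReal (ρ x) ≤
        ENNReal.ofReal C * (1 + ENNReal.ofReal (relE γ (ρ x) (r x))) := by
      intro x
      have hE0 : 0 ≤ relE γ (ρ x) (r x) :=
        relE_nonneg γ _ _ hγ (hρ0 x) (lt_of_lt_of_le ha (hrab x).1)
      calc ENNReal.ofReal (ρ x) ≤ ENNReal.ofReal (C * (1 + relE γ (ρ x) (r x))) :=
            ENNReal.ofReal_le_ofReal (hkey _ _ (hρ0 x) (hrab x))
        _ = ENNReal.ofReal C * (1 + ENNReal.ofReal (relE γ (ρ x) (r x))) := by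
            rw [ENNReal.ofReal_mul hC.le, ENNReal.ofReal_add zero_le_one hE0,
              ENNReal.ofReal_one]
    calc ∫⁻ x, ENNReal.ofReal (ρ x) ∂μ
        ≤ ∫⁻ x, ENNReal.ofReal C * (1 + ENNReal.ofReal (relE γ (ρ x) (r x))) ∂μ :=
          lintegral_mono hpw
      _ = ENNReal.ofReal C * ∫⁻ x, (1 + ENNReal.ofReal (relE γ (ρ x) (r x))) ∂μ :=
          lintegral_const_mul' _ _ ENNReal.ofReal_ne_top
      _ = ENNReal.ofReal C * (μ Set.univ + ∫⁻ x, ENNReal.ofReal (relE γ (ρ x) (r x)) ∂μ) := by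
          rw [lintegral_add_left measurable_const, lintegral_one]
  calc ∫⁻ x, ENNReal.ofReal (ρ x * (F x) ^ 2) ∂μ
      ≤ N ^ 2 * ∫⁻ x, ENNReal.ofReal (ρ x) ∂μ := step1
    _ ≤ N ^ 2 * (ENNReal.ofReal C *
        (μ Set.univ + ∫⁻ x, ENNReal.ofReal (relE γ (ρ x) (r x)) ∂μ)) :=
        mul_le_mul_right step2 _
    _ = ENNReal.ofReal C * N ^ 2 *
        (μ Set.univ + ∫⁻ x, ENNReal.ofReal (relE γ (ρ x) (r x)) ∂μ) := by ring
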